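/- A finite ring R is Frobenius if and only if for every matrix A over R (of any size m×n), the left row space {xA : x ∈ R^m} and the right column space {Ay : y ∈ R^n} have the same cardinality. -/
import Mathlib


section Aux
variable {R : Type} [Ring R] [Fintype R]

private def mulVecHom {m n : ℕ} (A : Matrix (Fin m) (Fin n) R) :
    (Fin n → R) →+ (Fin m → R) :=
  AddMonoidHom.mk' (fun y i => ∑ j, A i j * y j) (by
    intro y z
    funext i
    simp [mul_add, Finset.sum_add_distrib])

private lemma key {m n : ℕ} (A : Matrix (Fin m) (Fin n) R) :
    Nat.card {d : Fin m → R // ∃ y : Fin n → R, d = fun i => ∑ j, A i j * y j} *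
      Nat.card {y : Fin n → R // ∀ i, ∑ j, A i j * y j = 0} = Fintype.card R ^ n := by
  have h1 : Nat.card {d : Fin m → R // ∃ y : Fin n → R, d = fun i => ∑ j, A i j * y j}
      = Nat.card (mulVecHom A).range := by
    apply Nat.card_congr (Equiv.subtypeEquivRight _)
    intro d
    simp [mulVecHom, AddMonoidHom.mem_range, eq_comm]
  have h2 : Nat.card {y : Fin n → R // ∀ i, ∑ j, A i j * y j = 0}
      = Nat.card (mulVecHom A).ker := by
    apply Nat.card_congr (Equiv.subtypeEquivRight _)
    intro y
    simp [mulVecHom, AddMonoidHom.mem_ker, funext_iff]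
  rw [h1, h2, mul_comm]
  have h3 := AddSubgroup.card_eq_card_quotient_mul_card_addSubgroup (mulVecHom A).ker
  have hq : Nat.card ((Fin n → R) ⧸ (mulVecHom A).ker) = Nat.card (mulVecHom A).range :=
    Nat.card_congr (QuotientAddGroup.quotientKerEquivRange (mulVecHom A)).toEquiv
  rw [hq, mul_comm] at h3
  rw [← h3]
  simp [Nat.card_eq_fintype_card]

omit [Fintype R] in
private lemma dot {m n : ℕ} (A : Matrix (Fin m) (Fin n) R) (x : Fin m → R) (y : Fin n → R) :
    ∑ j, (∑ i, x i * A i j) * y j = ∑ i, x i * ∑ j, A i j * y j := by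
  simp only [Finset.sum_mul, Finset.mul_sum, mul_assoc]
  exact Finset.sum_comm

end Aux

/-- A finite ring is Frobenius iff `|C|·|C^⊥| = |R|^n` for every left submodule
`C ≤ R^n`, where `C^⊥ = {y : c·y = 0 for all c ∈ C}`. -/
def IsFrobenius (R : Type) [Ring R] [Fintype R] : Prop :=
  ∀ (n : ℕ) (C : Submodule R (Fin n → R)),
    Nat.card C *
      Nat.card {y : Fin n → R // ∀ c ∈ C, ∑ i, c i * y i = 0} =
    Fintype.card R ^ n

/-- A finite ring `R` is Frobenius iff for every matrix `A ∈ R^{m×n}` the left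
row space `{xA : x ∈ R^m}` and the right column space `{Ay : y ∈ R^n}` have the
same cardinality. -/
theorem frobenius_iff_rowSpace_card_eq_colSpace_card
    (R : Type) [Ring R] [Fintype R] :
    IsFrobenius R ↔
      ∀ (m n : ℕ) (A : Matrix (Fin m) (Fin n) R),
        Nat.card {c : Fin n → R // ∃ x : Fin m → R, c = fun j => ∑ i, x i * A i j} =
        Nat.card {d : Fin m → R // ∃ y : Fin n → R, d = fun i => ∑ j, A i j * y j} := by
  constructor
  · intro hF m n A
    -- The row space as a left submodule.
    let C : Submodule R (Fin n → R) :=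
      { carrier := {c | ∃ x : Fin m → R, c = fun j => ∑ i, x i * A i j}
        add_mem' := by
          rintro a b ⟨x, rfl⟩ ⟨x', rfl⟩
          exact ⟨x + x', by funext j; simp [add_mul, Finset.sum_add_distrib]⟩
        zero_mem' := ⟨0, by funext j; simp⟩
        smul_mem' := by
          rintro r a ⟨x, rfl⟩
          exact ⟨r • x, by funext j; simp [Finset.mul_sum, mul_assoc]⟩ }
    have hC := hF n C
    have hrow : Nat.card {c : Fin n → R // ∃ x : Fin m → R, c = fun j => ∑ i, x i * A i j}
        = Nat.card C := Nat.card_congr (Equiv.subtypeEquivRight fun c => Iff.rfl)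
    have hperp : Nat.card {y : Fin n → R // ∀ c ∈ C, ∑ i, c i * y i = 0}
        = Nat.card {y : Fin n → R // ∀ i, ∑ j, A i j * y j = 0} := by
      apply Nat.card_congr (Equiv.subtypeEquivRight _)
      intro y
      constructor
      · intro h i
        have hrowmem : (fun j => A i j) ∈ C := by
          refine ⟨Pi.single i 1, ?_⟩
          funext j
          simp [Pi.single_apply, ite_mul, Finset.sum_ite_eq']
        exact h _ hrowmem
      · rintro h c ⟨x, rfl⟩
        calc ∑ j, (∑ i, x i * A i j) * y j
            = ∑ i, x i * ∑ j, A i j * y j := dot A x y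
          _ = 0 := by simp [h]
    have hKpos : 0 < Nat.card {y : Fin n → R // ∀ i, ∑ j, A i j * y j = 0} := by
      haveI : Nonempty {y : Fin n → R // ∀ i, ∑ j, A i j * y j = 0} := ⟨⟨0, by simp⟩⟩
      exact Nat.card_pos
    have hk := key A
    rw [hrow]
    rw [hperp] at hC
    exact Nat.eq_of_mul_eq_mul_right hKpos (hC.trans hk.symm)
  · intro h n C
    classical
    haveI : Fintype C := Fintype.ofFinite _
    set m := Fintype.card C with hm
    let e : C ≃ Fin m := Fintype.equivFin C
    let A : Matrix (Fin m) (Fin n) R := fun i j => (e.symm i : Fin n → R) j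
    have memiff : ∀ c : Fin n → R,
        (∃ x : Fin m → R, c = fun j => ∑ i, x i * A i j) ↔ c ∈ C := by
      intro c
      constructor
      · rintro ⟨x, rfl⟩
        have hrepr : (fun j => ∑ i, x i * A i j)
            = ∑ i, x i • ((e.symm i : Fin n → R)) := by
          funext j
          simp [A, Finset.sum_apply]
        rw [hrepr]
        exact Submodule.sum_mem C fun i _ => Submodule.smul_mem C _ (e.symm i).2
      · intro hc
        refine ⟨Pi.single (e ⟨c, hc⟩) 1, ?_⟩
        funext j
        simp [A, Pi.single_apply, ite_mul, Finset.sum_ite_eq']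
    have perpiff : ∀ y : Fin n → R,
        (∀ c ∈ C, ∑ i, c i * y i = 0) ↔ (∀ i : Fin m, ∑ j, A i j * y j = 0) := by
      intro y
      constructor
      · intro hy i
        exact hy _ (e.symm i).2
      · intro hy c hc
        have := hy (e ⟨c, hc⟩)
        simpa [A] using this
    have h1 : Nat.card C
        = Nat.card {c : Fin n → R // ∃ x : Fin m → R, c = fun j => ∑ i, x i * A i j} :=
      Nat.card_congr (Equiv.subtypeEquivRight memiff).symm
    have h2 : Nat.card {y : Fin n → R // ∀ c ∈ C, ∑ i, c i * y i = 0}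
        = Nat.card {y : Fin n → R // ∀ i, ∑ j, A i j * y j = 0} :=
      Nat.card_congr (Equiv.subtypeEquivRight perpiff)
    rw [h1, h2, h m n A]
    exact key A
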